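/- Let X be a random variable with E X ≤ 0 and -a ≤ X ≤ b almost surely, where a, b > 0. Let BS have the standardized Bernoulli distribution with parameter p = a/(a+b), i.e., P(BS = √(q/p)) = p = 1 - P(BS = -√(p/q)) with q = 1 - p. Then for every nondecreasing convex function f : ℝ → ℝ, E f(X) ≤ E f(√(ab) · BS). -/

import Mathlib

open MeasureTheory Real

/-- If `E X ≤ 0` and `-a ≤ X ≤ b` a.s. (`a, b > 0`), then for any nondecreasing convex
`f`, `E f(X) ≤ E f(√(ab)·BS)` where `BS ∼ BS(p)` with `p = a/(a+b)`, `q = 1 - p`. -/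
theorem expectation_le_standardized_bernoulli
    {Ω : Type*} [MeasurableSpace Ω] (μ : Measure Ω) [IsProbabilityMeasure μ]
    (X : Ω → ℝ) (hXm : Measurable X)
    (a b : ℝ) (ha : 0 < a) (hb : 0 < b)
    (hbd : ∀ᵐ ω ∂μ, -a ≤ X ω ∧ X ω ≤ b)
    (hmean : ∫ ω, X ω ∂μ ≤ 0)
    (f : ℝ → ℝ) (hf_mono : Monotone f) (hf_conv : ConvexOn ℝ Set.univ f) :
    ∫ ω, f (X ω) ∂μ ≤
      (a / (a + b)) * f (Real.sqrt (a * b) * Real.sqrt ((1 - a / (a + b)) / (a / (a + b))))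
        + (1 - a / (a + b)) *
            f (Real.sqrt (a * b) * (-Real.sqrt ((a / (a + b)) / (1 - a / (a + b))))) := by
  have hab : 0 < a + b := by linarith
  have h1 : (1 : ℝ) - a / (a + b) = b / (a + b) := by field_simp; ring
  have hq : ((1 - a / (a + b)) / (a / (a + b))) = b / a := by
    rw [h1]; field_simp
  have hp : ((a / (a + b)) / (1 - a / (a + b))) = a / b := by
    rw [h1]; field_simp
  have e1 : Real.sqrt (a * b) * Real.sqrt ((1 - a / (a + b)) / (a / (a + b))) = b := by
    rw [hq, ← Real.sqrt_mul (by positivity),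
      show a * b * (b / a) = b ^ 2 by field_simp, Real.sqrt_sq hb.le]
  have e2 : Real.sqrt (a * b) * (-Real.sqrt ((a / (a + b)) / (1 - a / (a + b)))) = -a := by
    rw [hp, mul_neg, ← Real.sqrt_mul (by positivity),
      show a * b * (a / b) = a ^ 2 by field_simp, Real.sqrt_sq ha.le]
  rw [e1, e2]
  -- chord bound
  have key : ∀ x : ℝ, -a ≤ x → x ≤ b →
      f x ≤ ((b - x) / (a + b)) * f (-a) + ((x + a) / (a + b)) * f b := by
    intro x hx1 hx2
    have hxeq : ((b - x) / (a + b)) • (-a) + ((x + a) / (a + b)) • b = x := by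
      rw [smul_eq_mul, smul_eq_mul, div_mul_eq_mul_div, div_mul_eq_mul_div, ← add_div, div_eq_iff hab.ne']; ring
    have ht1 : 0 ≤ (b - x) / (a + b) := div_nonneg (by linarith) hab.le
    have ht2 : 0 ≤ (x + a) / (a + b) := div_nonneg (by linarith) hab.le
    have hts : (b - x) / (a + b) + (x + a) / (a + b) = 1 := by field_simp; ring
    have h := hf_conv.2 (Set.mem_univ (-a)) (Set.mem_univ b) ht1 ht2 hts
    calc f x = f (((b - x) / (a + b)) • (-a) + ((x + a) / (a + b)) • b) := by rw [hxeq]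
      _ ≤ ((b - x) / (a + b)) • f (-a) + ((x + a) / (a + b)) • f b := h
      _ = ((b - x) / (a + b)) * f (-a) + ((x + a) / (a + b)) * f b := by
          simp [smul_eq_mul]
  -- measurability / integrability
  have hfX_meas : AEStronglyMeasurable (fun ω => f (X ω)) μ :=
    (hf_mono.measurable.comp hXm).aestronglyMeasurable
  have hX_int : Integrable X μ := by
    refine (integrable_const (max a b)).mono' hXm.aestronglyMeasurable ?_
    filter_upwards [hbd] with ω ⟨h1', h2'⟩
    rw [Real.norm_eq_abs, abs_le]
    constructor
    · have : a ≤ max a b := le_max_left a b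
      linarith
    · exact h2'.trans (le_max_right a b)
  have hfX_int : Integrable (fun ω => f (X ω)) μ := by
    refine (integrable_const (max ‖f (-a)‖ ‖f b‖)).mono' hfX_meas ?_
    filter_upwards [hbd] with ω ⟨h1', h2'⟩
    have hlo : f (-a) ≤ f (X ω) := hf_mono h1'
    have hhi : f (X ω) ≤ f b := hf_mono h2'
    rw [Real.norm_eq_abs, abs_le]
    constructor
    · have : -‖f (-a)‖ ≤ f (-a) := neg_abs_le _
      have h2 : -max ‖f (-a)‖ ‖f b‖ ≤ -‖f (-a)‖ := by
        simp [le_max_left]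
      linarith
    · have : f b ≤ ‖f b‖ := le_abs_self _
      have h2 : ‖f b‖ ≤ max ‖f (-a)‖ ‖f b‖ := le_max_right _ _
      linarith
  -- the bounding integrand, written as c + d * X
  set d : ℝ := (f b - f (-a)) / (a + b) with hd
  set c : ℝ := (b * f (-a) + a * f b) / (a + b) with hc
  have hg_int : Integrable (fun ω => c + d * X ω) μ :=
    (integrable_const c).add (hX_int.const_mul d)
  have step1 : ∫ ω, f (X ω) ∂μ ≤ ∫ ω, c + d * X ω ∂μ := by
    refine integral_mono_ae hfX_int hg_int ?_
    filter_upwards [hbd] with ω ⟨h1', h2'⟩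
    have := key (X ω) h1' h2'
    have heq : ((b - X ω) / (a + b)) * f (-a) + ((X ω + a) / (a + b)) * f b
        = c + d * X ω := by
      rw [hc, hd]; field_simp; ring
    linarith [heq ▸ this]
  have step2 : ∫ ω, c + d * X ω ∂μ = c + d * ∫ ω, X ω ∂μ := by
    rw [integral_add (integrable_const c) (hX_int.const_mul d),
      integral_const, integral_const_mul]
    simp
  have hd_nonneg : 0 ≤ d := by
    have : f (-a) ≤ f b := hf_mono (by linarith)
    exact div_nonneg (by linarith) hab.le
  have step3 : c + d * ∫ ω, X ω ∂μ ≤ c :=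
    by nlinarith [mul_nonneg hd_nonneg (neg_nonneg.mpr hmean)]
  have hfinal : c = a / (a + b) * f b + (1 - a / (a + b)) * f (-a) := by
    rw [hc, h1]; field_simp; ring
  linarith [step1, step2 ▸ step1]
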